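/- The function ψ(s) = (1 - (1+s)e^{-s})/s is nonnegative on (0,∞), and its derivative ψ'(s) = (1 - (1 + s + s²)e^{-s})/s² has exactly one zero s* in (0,∞); moreover s* ∈ (1.7, 1.9) and ψ(s*) < 0.3. Consequently sup_{s>0} |((1+s)e^{-s}-1)/s| < 0.3. -/

import Mathlib

open Real

noncomputable def phiAux (s : ℝ) : ℝ := (1 + s + s ^ 2) * Real.exp (-s)
noncomputable def psiAux (s : ℝ) : ℝ := (1 - (1 + s) * Real.exp (-s)) / s

lemma exp_089_le : Real.exp 0.89 ≤ 2.4352 := by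
  calc Real.exp 0.89 ≤ (∑ m ∈ Finset.range 6, (0.89:ℝ) ^ m / m.factorial) +
        0.89 ^ 6 * (6 + 1) / (Nat.factorial 6 * 6) :=
        Real.exp_bound' (by norm_num) (by norm_num) (by norm_num)
    _ ≤ 2.4352 := by norm_num [Finset.sum_range_succ, Nat.factorial]

lemma exp_178_le : Real.exp 1.78 ≤ 5.9303 := by
  have h : Real.exp 1.78 = Real.exp 0.89 * Real.exp 0.89 := by
    rw [← Real.exp_add]; norm_num
  nlinarith [exp_089_le, Real.exp_pos 0.89]

lemma exp_19_gt : (6.51 : ℝ) < Real.exp 1.9 := by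
  have h := Real.sum_le_exp_of_nonneg (by norm_num : (0:ℝ) ≤ 1.9) 6
  have : (6.59 : ℝ) ≤ ∑ i ∈ Finset.range 6, (1.9:ℝ) ^ i / i.factorial := by
    norm_num [Finset.sum_range_succ, Nat.factorial]
  linarith

lemma phi_deriv (x : ℝ) : HasDerivAt phiAux (x * (1 - x) * Real.exp (-x)) x := by
  have h1 : HasDerivAt (fun s : ℝ => 1 + s + s ^ 2) (1 + 2 * x) x := by
    have := ((hasDerivAt_id x).const_add 1).add ((hasDerivAt_pow 2 x))
    exact this.congr_deriv (by push_cast; ring)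
  have h2 : HasDerivAt (fun s : ℝ => Real.exp (-s)) (-Real.exp (-x)) x := by
    have := (Real.hasDerivAt_exp (-x)).comp x ((hasDerivAt_id x).neg)
    exact this.congr_deriv (by ring)
  have := h1.mul h2
  exact this.congr_deriv (by ring)

lemma phi_cont : Continuous phiAux := by
  unfold phiAux; fun_prop

lemma phi_mono : StrictMonoOn phiAux (Set.Icc (0:ℝ) 1) := by
  apply strictMonoOn_of_deriv_pos (convex_Icc _ _) phi_cont.continuousOn
  intro x hx
  rw [interior_Icc] at hx
  rw [(phi_deriv x).deriv]
  have h1 : 0 < x * (1 - x) := mul_pos hx.1 (by linarith [hx.2])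
  positivity

lemma phi_anti : StrictAntiOn phiAux (Set.Ici (1:ℝ)) := by
  apply strictAntiOn_of_deriv_neg (convex_Ici _) phi_cont.continuousOn
  intro x hx
  rw [interior_Ici] at hx
  rw [(phi_deriv x).deriv]
  have hx' : (1:ℝ) < x := hx
  have h1 : x * (1 - x) < 0 := mul_neg_of_pos_of_neg (by linarith) (by linarith)
  exact mul_neg_of_neg_of_pos h1 (Real.exp_pos _)

lemma phi_zero : phiAux 0 = 1 := by simp [phiAux]

lemma phi_gt_one {x : ℝ} (hx : 0 < x) (hx1 : x ≤ 1) : 1 < phiAux x := by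
  have := phi_mono (Set.mem_Icc.mpr ⟨le_refl 0, zero_le_one⟩) (Set.mem_Icc.mpr ⟨hx.le, hx1⟩) hx
  rwa [phi_zero] at this

lemma psi_deriv {x : ℝ} (hx : x ≠ 0) :
    HasDerivAt psiAux ((phiAux x - 1) / x ^ 2) x := by
  have hN : HasDerivAt (fun s : ℝ => 1 - (1 + s) * Real.exp (-s)) (x * Real.exp (-x)) x := by
    have h2 : HasDerivAt (fun s : ℝ => Real.exp (-s)) (-Real.exp (-x)) x := by
      have := (Real.hasDerivAt_exp (-x)).comp x ((hasDerivAt_id x).neg)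
      exact this.congr_deriv (by ring)
    have h1 : HasDerivAt (fun s : ℝ => (1 + s)) (1:ℝ) x := by
      simpa using (hasDerivAt_id x).const_add 1
    have := (h1.mul h2).const_sub 1
    exact this.congr_deriv (by ring)
  have := hN.div (hasDerivAt_id x) hx
  refine this.congr_deriv ?_
  unfold phiAux
  simp only [id]
  field_simp
  ring

theorem stmt_5 :
    (∀ s : ℝ, 0 < s → 0 ≤ (1 - (1 + s) * Real.exp (-s)) / s) ∧
    ∃ sstar : ℝ,
      (0 < sstar ∧ (1 - (1 + sstar + sstar ^ 2) * Real.exp (-sstar)) / sstar ^ 2 = 0) ∧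
      (∀ t : ℝ, 0 < t → (1 - (1 + t + t ^ 2) * Real.exp (-t)) / t ^ 2 = 0 → t = sstar) ∧
      sstar ∈ Set.Ioo (1.7 : ℝ) 1.9 ∧
      (1 - (1 + sstar) * Real.exp (-sstar)) / sstar < 0.3 ∧
      ∀ s : ℝ, 0 < s → |((1 + s) * Real.exp (-s) - 1) / s| < 0.3 := by
  -- nonnegativity
  have hnonneg : ∀ s : ℝ, 0 < s → 0 ≤ (1 - (1 + s) * Real.exp (-s)) / s := by
    intro s hs
    have hmul : Real.exp s * Real.exp (-s) = 1 := by rw [← Real.exp_add]; simp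
    have h1 : (1 + s) * Real.exp (-s) ≤ Real.exp s * Real.exp (-s) :=
      mul_le_mul_of_nonneg_right (by linarith [Real.add_one_le_exp s]) (Real.exp_pos _).le
    exact div_nonneg (by linarith) hs.le
  refine ⟨hnonneg, ?_⟩
  -- bracketing values of phi
  have h178 : 1 ≤ phiAux 1.78 := by
    have hmul : Real.exp 1.78 * Real.exp (-1.78) = 1 := by rw [← Real.exp_add]; simp
    have h1 : Real.exp 1.78 * Real.exp (-1.78) ≤ (1 + 1.78 + 1.78 ^ 2) * Real.exp (-1.78) :=
      mul_le_mul_of_nonneg_right (by nlinarith [exp_178_le]) (Real.exp_pos _).le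
    unfold phiAux
    linarith
  have h19 : phiAux 1.9 < 1 := by
    have hmul : Real.exp 1.9 * Real.exp (-1.9) = 1 := by rw [← Real.exp_add]; simp
    have h1 : (1 + 1.9 + 1.9 ^ 2) * Real.exp (-1.9) < Real.exp 1.9 * Real.exp (-1.9) :=
      mul_lt_mul_of_pos_right (by nlinarith [exp_19_gt]) (Real.exp_pos _)
    unfold phiAux
    linarith
  -- existence of sstar by IVT
  obtain ⟨sstar, hsmem, hphis⟩ :=
    intermediate_value_Icc' (by norm_num : (1.78:ℝ) ≤ 1.9) phi_cont.continuousOn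
      (Set.mem_Icc.mpr ⟨h19.le, h178⟩)
  have hs1 : (1.78:ℝ) ≤ sstar := hsmem.1
  have hs2 : sstar < 1.9 := by
    rcases lt_or_eq_of_le hsmem.2 with h | h
    · exact h
    · exfalso; rw [h] at hphis; rw [hphis] at h19; exact lt_irrefl _ h19
  have hspos : 0 < sstar := by linarith
  have hs1' : (1:ℝ) ≤ sstar := by linarith
  have hEpos := Real.exp_pos (-sstar)
  have hE : (1 + sstar + sstar ^ 2) * Real.exp (-sstar) = 1 := hphis
  -- psi sstar < 0.3
  have hquad : 0 < 3 * sstar ^ 2 - 7 * sstar + 3 := by nlinarith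
  have hpsis : (1 - (1 + sstar) * Real.exp (-sstar)) / sstar < 0.3 := by
    rw [div_lt_iff₀ hspos]
    nlinarith [mul_pos (mul_pos hspos hEpos) hquad]
  -- psi is maximized at sstar
  have hle : ∀ s : ℝ, 0 < s → psiAux s ≤ psiAux sstar := by
    intro s hs
    rcases lt_trichotomy s sstar with h | h | h
    · have hm : StrictMonoOn psiAux (Set.Icc s sstar) := by
        apply strictMonoOn_of_deriv_pos (convex_Icc _ _)
        · intro x hx
          exact (psi_deriv (ne_of_gt (lt_of_lt_of_le hs hx.1))).continuousAt.continuousWithinAt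
        · intro x hx
          rw [interior_Icc] at hx
          have hxpos : 0 < x := hs.trans hx.1
          rw [(psi_deriv (ne_of_gt hxpos)).deriv]
          apply div_pos _ (by positivity)
          rcases le_or_gt x 1 with h1 | h1
          · linarith [phi_gt_one hxpos h1]
          · have := phi_anti (Set.mem_Ici.mpr h1.le) (Set.mem_Ici.mpr hs1') hx.2
            rw [hphis] at this; linarith
      exact (hm (Set.mem_Icc.mpr ⟨le_refl s, h.le⟩)
        (Set.mem_Icc.mpr ⟨h.le, le_refl sstar⟩) h).le
    · rw [h]
    · have hm : StrictAntiOn psiAux (Set.Icc sstar s) := by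
        apply strictAntiOn_of_deriv_neg (convex_Icc _ _)
        · intro x hx
          exact (psi_deriv (ne_of_gt (lt_of_lt_of_le hspos hx.1))).continuousAt.continuousWithinAt
        · intro x hx
          rw [interior_Icc] at hx
          have hxpos : 0 < x := hspos.trans hx.1
          rw [(psi_deriv (ne_of_gt hxpos)).deriv]
          apply div_neg_of_neg_of_pos _ (by positivity)
          have := phi_anti (Set.mem_Ici.mpr hs1') (Set.mem_Ici.mpr (by linarith [hx.1] : (1:ℝ) ≤ x)) hx.1
          rw [hphis] at this; linarith
      exact (hm (Set.mem_Icc.mpr ⟨le_refl sstar, h.le⟩)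
        (Set.mem_Icc.mpr ⟨h.le, le_refl s⟩) h).le
  refine ⟨sstar, ⟨hspos, ?_⟩, ?_, ⟨by linarith, hs2⟩, hpsis, ?_⟩
  · have : 1 - (1 + sstar + sstar ^ 2) * Real.exp (-sstar) = 0 := by linarith
    rw [this, zero_div]
  · intro t ht heq
    have ht2 : (t:ℝ) ^ 2 ≠ 0 := by positivity
    have hnum : 1 - (1 + t + t ^ 2) * Real.exp (-t) = 0 := by
      rcases div_eq_zero_iff.mp heq with h | h
      · exact h
      · exact absurd h ht2
    have hphit : phiAux t = 1 := by unfold phiAux; linarith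
    have ht1 : (1:ℝ) ≤ t := by
      by_contra hcon
      push_neg at hcon
      have := phi_gt_one ht hcon.le
      rw [hphit] at this; exact lt_irrefl _ this
    exact phi_anti.injOn (Set.mem_Ici.mpr ht1) (Set.mem_Ici.mpr hs1')
      (hphit.trans hphis.symm)
  · intro s hs
    have hmul : Real.exp s * Real.exp (-s) = 1 := by rw [← Real.exp_add]; simp
    have hlt : (1 + s) * Real.exp (-s) - 1 < 0 := by
      have h1 : (1 + s) * Real.exp (-s) < Real.exp s * Real.exp (-s) :=
        mul_lt_mul_of_pos_right (by linarith [Real.add_one_lt_exp (ne_of_gt hs)]) (Real.exp_pos _)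
      linarith
    have habs : |((1 + s) * Real.exp (-s) - 1) / s| = psiAux s := by
      rw [abs_of_neg (div_neg_of_neg_of_pos hlt hs)]
      unfold psiAux
      ring
    rw [habs]
    have h1 := hle s hs
    have h2 : psiAux sstar < 0.3 := hpsis
    linarith
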